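/- If n is a positive integer and n₀ is its radical (the product of the distinct prime divisors of n, i.e., the squarefree part), then φ̃(n₀) ≤ φ̃(n). -/
import Mathlib


/-- φ̃(n): number of m with 1 ≤ m ≤ n, gcd(m,n)=1, m not prime. -/
def phiT (n : ℕ) : ℕ :=
  ((Finset.Icc 1 n).filter (fun m => Nat.gcd m n = 1 ∧ ¬ m.Prime)).card

/-- The product of the first k primes. -/
noncomputable def primorialN (k : ℕ) : ℕ := ∏ i ∈ Finset.range k, Nat.nth Nat.Prime i

theorem stmt2 (n : ℕ) (hn : 0 < n) :
    phiT (∏ p ∈ n.primeFactors, p) ≤ phiT n := by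
  have hrad : (∏ p ∈ n.primeFactors, p) ∣ n := Nat.prod_primeFactors_dvd n
  have hle : (∏ p ∈ n.primeFactors, p) ≤ n := Nat.le_of_dvd hn hrad
  have hcop : ∀ m : ℕ, Nat.gcd m (∏ p ∈ n.primeFactors, p) = 1 ↔ Nat.gcd m n = 1 := by
    intro m
    constructor
    · intro h
      by_contra hne
      obtain ⟨p, hp, hpd⟩ := (Nat.gcd m n).exists_prime_and_dvd hne
      have hpn : p ∈ n.primeFactors := Nat.mem_primeFactors.mpr
        ⟨hp, hpd.trans (Nat.gcd_dvd_right m n), hn.ne'⟩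
      have h1 : p ∣ Nat.gcd m (∏ p ∈ n.primeFactors, p) :=
        Nat.dvd_gcd (hpd.trans (Nat.gcd_dvd_left m n)) (Finset.dvd_prod_of_mem _ hpn)
      rw [h] at h1
      exact hp.one_lt.ne' (Nat.eq_one_of_dvd_one h1)
    · intro h
      exact Nat.Coprime.prod_right fun p hp =>
        Nat.Coprime.coprime_dvd_right (Nat.dvd_of_mem_primeFactors hp) h
  unfold phiT
  apply Finset.card_le_card
  intro m hm
  simp only [Finset.mem_filter, Finset.mem_Icc] at *
  exact ⟨⟨hm.1.1, hm.1.2.trans hle⟩, (hcop m).mp hm.2.1, hm.2.2⟩
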